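/- Let C₁ ⊆ Σ^{n-κ+1} be a mutually uncorrelated code and C₂ = Σ^{κ-1} be the full set of sequences of length κ-1, where 1 ≤ κ ≤ n. Then the concatenation code C = { a·b : a ∈ C₁, b ∈ C₂ } ⊆ Σ^n is a κ-weakly mutually uncorrelated code of size |C₁| · q^{κ-1}. -/

import Mathlib

/-- Concatenating an MU code of length n-κ+1 with all sequences of length κ-1 gives
a κ-WMU code of size |C₁| · q^{κ-1}. -/
theorem stmt_3 (q n κ : ℕ) (hκ1 : 1 ≤ κ) (hκn : κ ≤ n)
    (C₁ : Finset (List (Fin q)))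
    (h1len : ∀ w ∈ C₁, w.length = n - κ + 1)
    (h1MU : ∀ a ∈ C₁, ∀ b ∈ C₁, ∀ p : List (Fin q),
      p ≠ [] → p.length < n - κ + 1 → p <+: a → ¬ p <:+ b)
    (C : Set (List (Fin q)))
    (hC : C = {w | ∃ a ∈ C₁, ∃ b : List (Fin q), b.length = κ - 1 ∧ w = a ++ b}) :
    (∀ x ∈ C, ∀ y ∈ C, ∀ p : List (Fin q),
      κ ≤ p.length → p.length < n → p <+: x → ¬ p <:+ y) ∧
    C.ncard = C₁.card * q ^ (κ - 1) := by
  constructor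
  · intro x hx y hy p hpκ hpn hpre hsuf
    rw [hC] at hx hy
    obtain ⟨a, ha, b, hb, rfl⟩ := hx
    obtain ⟨a', ha', b', hb', rfl⟩ := hy
    have hal := h1len a ha
    have ha'l := h1len a' ha'
    set L := p.length with hL
    set m := L - (κ - 1) with hm
    have hmL : m ≤ L := Nat.sub_le _ _
    have hma : m ≤ a.length := by omega
    set p' := p.take m with hp'
    have hp'len : p'.length = m := by
      simp [hp', Nat.min_eq_left hmL]
      omega
    -- p' is a prefix of a
    have h1 : p' <+: (a ++ b) := (p.take_prefix m).trans hpre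
    have h2 : p' = (a ++ b).take p'.length := List.prefix_iff_eq_take.mp h1
    have h3 : p' = a.take m := by
      rw [h2, hp'len, List.take_append_of_le_length (by omega)]
    have hpa : p' <+: a := by rw [h3]; exact a.take_prefix m
    -- p' is a suffix of a'
    obtain ⟨t, ht⟩ := hsuf
    have hsplit : (t ++ p') ++ p.drop m = a' ++ b' := by
      rw [List.append_assoc, hp', List.take_append_drop]
      exact ht
    have hlen2 : (p.drop m).length = b'.length := by
      simp [hb']; omega
    have := List.append_inj' hsplit hlen2
    have hpa' : p' <:+ a' := ⟨t, this.1⟩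
    exact h1MU a ha a' ha' p'
      (by intro h; rw [h] at hp'len; simp at hp'len; omega)
      (by omega) hpa hpa'
  · have hCeq : C = ↑((C₁ ×ˢ (Finset.univ : Finset (Fin (κ - 1) → Fin q))).image
        (fun ab => ab.1 ++ List.ofFn ab.2)) := by
      rw [hC]
      ext w
      simp only [Finset.coe_image, Set.mem_image, Finset.mem_coe, Finset.mem_product,
        Finset.mem_univ, and_true, Set.mem_setOf_eq, Prod.exists]
      constructor
      · rintro ⟨a, ha, b, hb, rfl⟩
        refine ⟨a, fun i => b.get (i.cast hb.symm), ha, ?_⟩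
        congr 1
        apply List.ext_get (by simp [hb])
        intro i h1 h2
        simp
      · rintro ⟨a, f, ha, rfl⟩
        exact ⟨a, ha, List.ofFn f, by simp, rfl⟩
    rw [hCeq, Set.ncard_coe_finset]
    rw [Finset.card_image_of_injOn, Finset.card_product]
    · simp [Fintype.card_fun]
    · rintro ⟨a, f⟩ haf ⟨a', f'⟩ haf' heq
      simp only [Finset.mem_coe, Finset.mem_product] at haf haf'
      have hlen : a.length = a'.length := by
        rw [h1len a haf.1, h1len a' haf'.1]
      obtain ⟨h1, h2⟩ := List.append_inj heq hlen
      have : f = f' := List.ofFn_injective h2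
      exact Prod.ext h1 this
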